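/- Poincaré path integral inverts the curl on star-shaped domains: let Ω ⊆ ℝ³ be open, let a ∈ Ω, and suppose Ω is star-shaped with respect to a (for every x ∈ Ω the segment from a to x lies in Ω). Let u : Ω → ℝ³ be C^∞ with div u := ∂₁u₁ + ∂₂u₂ + ∂₃u₃ = 0 on Ω. Define v(x) = −(x−a) × ∫₀¹ t · u(a + t(x−a)) dt for x ∈ Ω, where × is the cross product. Then v is C^∞ on Ω and curl v = u on Ω, where curl v = (∂₂v₃ − ∂₃v₂, ∂₃v₁ − ∂₁v₃, ∂₁v₂ − ∂₂v₁). -/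

import Mathlib

open MeasureTheory Set

noncomputable section

/-- The cross product on `ℝ³` (as a Euclidean space). -/
def cross3 (a b : EuclideanSpace ℝ (Fin 3)) : EuclideanSpace ℝ (Fin 3) :=
  (WithLp.equiv 2 (Fin 3 → ℝ)).symm
    ![a 1 * b 2 - a 2 * b 1, a 2 * b 0 - a 0 * b 2, a 0 * b 1 - a 1 * b 0]

/-- The partial derivative `∂_i` of the `j`-th component of a vector field. -/
def pdComp (i j : Fin 3)
    (v : EuclideanSpace ℝ (Fin 3) → EuclideanSpace ℝ (Fin 3))
    (x : EuclideanSpace ℝ (Fin 3)) : ℝ :=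
  fderiv ℝ (fun z => v z j) x (EuclideanSpace.single i 1)

/-- `curl v = (∂₂v₃ − ∂₃v₂, ∂₃v₁ − ∂₁v₃, ∂₁v₂ − ∂₂v₁)` (with indices `0,1,2`). -/
def curl3 (v : EuclideanSpace ℝ (Fin 3) → EuclideanSpace ℝ (Fin 3))
    (x : EuclideanSpace ℝ (Fin 3)) : EuclideanSpace ℝ (Fin 3) :=
  (WithLp.equiv 2 (Fin 3 → ℝ)).symm
    ![pdComp 1 2 v x - pdComp 2 1 v x,
      pdComp 2 0 v x - pdComp 0 2 v x,
      pdComp 0 1 v x - pdComp 1 0 v x]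

/-- `div u = ∂₁u₁ + ∂₂u₂ + ∂₃u₃`. -/
def div3 (u : EuclideanSpace ℝ (Fin 3) → EuclideanSpace ℝ (Fin 3))
    (x : EuclideanSpace ℝ (Fin 3)) : ℝ :=
  ∑ i : Fin 3, pdComp i i u x

abbrev E3 := EuclideanSpace ℝ (Fin 3)

open scoped Interval

set_option maxHeartbeats 1000000
set_option synthInstance.maxHeartbeats 400000

lemma hc (n : WithTop ℕ∞) (i : Fin 3) : ContDiff ℝ n (fun x : E3 => x i) :=
  (EuclideanSpace.proj i : E3 →L[ℝ] ℝ).contDiff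

lemma cross3_contDiff (n : WithTop ℕ∞) :
    ContDiff ℝ n (fun p : E3 × E3 => (WithLp.equiv 2 (Fin 3 → ℝ)).symm
    ![p.1 1 * p.2 2 - p.1 2 * p.2 1, p.1 2 * p.2 0 - p.1 0 * p.2 2,
      p.1 0 * p.2 1 - p.1 1 * p.2 0] : E3 × E3 → E3) := by
  rw [contDiff_euclidean]
  intro i
  fin_cases i <;> simp <;>
  exact (((hc n _).comp contDiff_fst).mul ((hc n _).comp contDiff_snd)).sub
      (((hc n _).comp contDiff_fst).mul ((hc n _).comp contDiff_snd))


lemma huIoc01 : Ι (0:ℝ) 1 ⊆ Icc (0:ℝ) 1 := by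
  rw [uIoc_of_le (by norm_num : (0:ℝ) ≤ 1)]; exact Ioc_subset_Icc_self

lemma paramIntegral_contDiffOn (n : ℕ) :
    ∀ {F : Type} [NormedAddCommGroup F] [NormedSpace ℝ F]
      (f : E3 × ℝ → F) (U : Set (E3 × ℝ)) (s : Set E3),
      IsOpen U → IsOpen s → ContDiffOn ℝ n f U → s ×ˢ Icc (0:ℝ) 1 ⊆ U →
      ContDiffOn ℝ n (fun x => ∫ t in (0:ℝ)..1, f (x, t)) s := by
  induction n with
  | zero =>
    intro F _ _ f U s hU hs hf hsub
    rw [show ((0:ℕ) : WithTop ℕ∞) = 0 by norm_cast, contDiffOn_zero] at hf ⊢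
    intro x₀ hx₀
    apply ContinuousWithinAt.mono_of_mem_nhdsWithin ?_ (self_mem_nhdsWithin)
    apply ContinuousAt.continuousWithinAt
    obtain ⟨δ, hδ, hball⟩ := Metric.isOpen_iff.1 hs x₀ hx₀
    have hcb : Metric.closedBall x₀ (δ/2) ⊆ s :=
      (Metric.closedBall_subset_ball (by linarith)).trans hball
    have hK : IsCompact (Metric.closedBall x₀ (δ/2) ×ˢ Icc (0:ℝ) 1) :=
      (isCompact_closedBall _ _).prod isCompact_Icc
    have hKU : Metric.closedBall x₀ (δ/2) ×ˢ Icc (0:ℝ) 1 ⊆ U :=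
      (Set.prod_mono hcb subset_rfl).trans hsub
    obtain ⟨C, hC⟩ := hK.exists_bound_of_continuousOn (hf.mono hKU)
    have hmeas : ∀ x ∈ Metric.closedBall x₀ (δ/2),
        AEStronglyMeasurable (fun t => f (x, t)) (volume.restrict (Ι (0:ℝ) 1)) := by
      intro x hx
      refine ContinuousOn.aestronglyMeasurable ?_ measurableSet_uIoc
      exact hf.comp ((continuous_const.prodMk continuous_id).continuousOn)
        (fun t ht => hKU ⟨hx, huIoc01 ht⟩)
    apply intervalIntegral.continuousAt_of_dominated_interval
      (bound := fun _ => C) (μ := volume)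
    · filter_upwards [Metric.closedBall_mem_nhds x₀ (show (0:ℝ) < δ/2 by positivity)] with x hx
      exact hmeas x hx
    · filter_upwards [Metric.closedBall_mem_nhds x₀ (show (0:ℝ) < δ/2 by positivity)] with x hx
      filter_upwards with t ht
      exact hC (x, t) ⟨hx, huIoc01 ht⟩
    · exact intervalIntegrable_const
    · filter_upwards with t ht
      have hmem : (x₀, t) ∈ U :=
        hKU ⟨Metric.mem_closedBall_self (by positivity), huIoc01 ht⟩
      have hin : ContinuousAt (fun x : E3 => (x, t)) x₀ :=
        (continuous_id.prodMk continuous_const).continuousAt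
      exact ContinuousAt.comp (g := f) (f := fun x : E3 => (x, t)) (x := x₀)
        (hf.continuousAt (hU.mem_nhds hmem)) hin
  | succ n ih =>
    intro F _ _ f U s hU hs hf hsub
    have hcast : ((n+1 : ℕ) : WithTop ℕ∞) = (n : WithTop ℕ∞) + 1 := by norm_cast
    rw [hcast] at hf ⊢
    set J : E3 →L[ℝ] E3 × ℝ := (ContinuousLinearMap.id ℝ E3).prod 0 with hJ
    set F' : E3 × ℝ → (E3 →L[ℝ] F) := fun p => (fderiv ℝ f p).comp J with hF'def
    have hfd : ContDiffOn ℝ n (fderiv ℝ f) U :=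
      ((contDiffOn_succ_iff_fderiv_of_isOpen hU).1 hf).2.2
    have hF'cd : ContDiffOn ℝ n F' U := by
      have hcl : ContDiff ℝ n (fun L : (E3 × ℝ) →L[ℝ] F => L.comp J) :=
        ((ContinuousLinearMap.compL ℝ E3 (E3 × ℝ) F).flip J).contDiff
      exact hcl.comp_contDiffOn hfd
    have hfc : ContinuousOn f U := hf.continuousOn
    have hdiff : ∀ p ∈ U, DifferentiableAt ℝ f p := fun p hp =>
      ((hf.differentiableOn (by simp)) p hp).differentiableAt (hU.mem_nhds hp)
    have hkey : ∀ x₀ ∈ s, HasFDerivAt (fun x => ∫ t in (0:ℝ)..1, f (x, t))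
        (∫ t in (0:ℝ)..1, F' (x₀, t)) x₀ := by
      intro x₀ hx₀
      obtain ⟨δ, hδ, hball⟩ := Metric.isOpen_iff.1 hs x₀ hx₀
      have hcb : Metric.closedBall x₀ (δ/2) ⊆ s :=
        (Metric.closedBall_subset_ball (by linarith)).trans hball
      have hK : IsCompact (Metric.closedBall x₀ (δ/2) ×ˢ Icc (0:ℝ) 1) :=
        (isCompact_closedBall _ _).prod isCompact_Icc
      have hKU : Metric.closedBall x₀ (δ/2) ×ˢ Icc (0:ℝ) 1 ⊆ U :=
        (Set.prod_mono hcb subset_rfl).trans hsub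
      obtain ⟨C, hC⟩ := hK.exists_bound_of_continuousOn (hF'cd.continuousOn.mono hKU)
      have hmeas : ∀ x ∈ Metric.closedBall x₀ (δ/2),
          AEStronglyMeasurable (fun t => f (x, t)) (volume.restrict (Ι (0:ℝ) 1)) := by
        intro x hx
        refine ContinuousOn.aestronglyMeasurable ?_ measurableSet_uIoc
        exact hfc.comp ((continuous_const.prodMk continuous_id).continuousOn)
          (fun t ht => hKU ⟨hx, huIoc01 ht⟩)
      apply intervalIntegral.hasFDerivAt_integral_of_dominated_of_fderiv_le
        (F := fun x t => f (x, t)) (F' := fun x t => F' (x, t))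
        (s := Metric.ball x₀ (δ/2)) (bound := fun _ => C) (Metric.ball_mem_nhds x₀ (by positivity))
      · filter_upwards [Metric.closedBall_mem_nhds x₀ (show (0:ℝ) < δ/2 by positivity)] with x hx
        exact hmeas x hx
      · apply ContinuousOn.intervalIntegrable
        rw [uIcc_of_le (by norm_num : (0:ℝ) ≤ 1)]
        exact hfc.comp ((continuous_const.prodMk continuous_id).continuousOn)
          (fun t ht => hKU ⟨Metric.mem_closedBall_self (by positivity), ht⟩)
      · refine ContinuousOn.aestronglyMeasurable ?_ measurableSet_uIoc
        exact hF'cd.continuousOn.comp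
          ((continuous_const.prodMk continuous_id).continuousOn)
          (fun t ht => hKU ⟨Metric.mem_closedBall_self (by positivity), huIoc01 ht⟩)
      · filter_upwards with t ht x hx
        exact hC (x, t) ⟨Metric.ball_subset_closedBall hx, huIoc01 ht⟩
      · exact intervalIntegrable_const
      · filter_upwards with t ht x hx
        have hmem : (x, t) ∈ U := hKU ⟨Metric.ball_subset_closedBall hx, huIoc01 ht⟩
        have hin : HasFDerivAt (fun y : E3 => (y, t)) J x :=
          (hasFDerivAt_id x).prodMk (hasFDerivAt_const t x)
        exact HasFDerivAt.comp (g := f) (x := x)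
          ((hdiff (x, t) hmem).hasFDerivAt) hin
    rw [contDiffOn_succ_iff_fderiv_of_isOpen hs]
    refine ⟨fun x hx => (hkey x hx).differentiableAt.differentiableWithinAt, ?_, ?_⟩
    · intro h; exact absurd h (by simp)
    · refine (ih F' U s hU hs hF'cd hsub).congr fun x hx => (hkey x hx).fderiv

lemma hsegmem (a : E3) {x : E3} {t : ℝ} (ht : t ∈ Icc (0:ℝ) 1) :
    a + t • (x - a) ∈ segment ℝ a x := by
  rw [segment_eq_image']
  exact ⟨t, ht, rfl⟩

lemma part1 (Ω : Set E3) (hΩ : IsOpen Ω) (a : E3)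
    (hstar : ∀ x ∈ Ω, segment ℝ a x ⊆ Ω)
    (u : E3 → E3) (hu : ContDiffOn ℝ (⊤ : ℕ∞) u Ω) :
    ContDiffOn ℝ (⊤ : ℕ∞)
    (fun x => -cross3 (x - a) (∫ t in (0 : ℝ)..1, t • u (a + t • (x - a)))) Ω := by
  set U : Set (E3 × ℝ) := (fun p : E3 × ℝ => a + p.2 • (p.1 - a)) ⁻¹' Ω with hUdef
  have hφ : ContDiff ℝ (⊤ : WithTop ℕ∞) (fun p : E3 × ℝ => a + p.2 • (p.1 - a)) := by
    apply ContDiff.add contDiff_const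
    exact contDiff_snd.smul (contDiff_fst.sub contDiff_const)
  have hUopen : IsOpen U := hΩ.preimage hφ.continuous
  have hsub : Ω ×ˢ Icc (0:ℝ) 1 ⊆ U := fun p hp =>
    hstar p.1 hp.1 (hsegmem a hp.2)
  have hint : ∀ n : ℕ, ContDiffOn ℝ n
      (fun x => ∫ t in (0:ℝ)..1, t • u (a + t • (x - a))) Ω := by
    intro n
    have hfcd : ContDiffOn ℝ n (fun p : E3 × ℝ => p.2 • u (a + p.2 • (p.1 - a))) U := by
      have hup : ContDiffOn ℝ n (fun p : E3 × ℝ => u (a + p.2 • (p.1 - a))) U :=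
        (hu.of_le (mod_cast le_top)).comp (hφ.of_le le_top).contDiffOn (fun p hp => hp)
      exact (contDiff_snd.of_le le_top).contDiffOn.smul hup
    exact paramIntegral_contDiffOn n _ U Ω hUopen hΩ hfcd hsub
  have hwcd : ContDiffOn ℝ (⊤ : ℕ∞)
      (fun x => ∫ t in (0:ℝ)..1, t • u (a + t • (x - a))) Ω := by
    rw [contDiffOn_infty]
    exact hint
  have hcr := cross3_contDiff ((⊤:ℕ∞) : WithTop ℕ∞)
  have : ContDiffOn ℝ (⊤ : ℕ∞)
      (fun x => cross3 (x - a) (∫ t in (0:ℝ)..1, t • u (a + t • (x - a)))) Ω := by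
    have hpair : ContDiffOn ℝ ((⊤:ℕ∞) : WithTop ℕ∞)
        (fun x : E3 => ((x - a, ∫ t in (0:ℝ)..1, t • u (a + t • (x - a))) : E3 × E3)) Ω :=
      ((contDiff_id.sub contDiff_const).contDiffOn).prodMk hwcd
    have := hcr.comp_contDiffOn hpair
    simpa [cross3, Function.comp_def] using this
  exact this.neg

section Part2

lemma part2 (Ω : Set E3) (hΩ : IsOpen Ω) (a : E3)
    (hstar : ∀ x ∈ Ω, segment ℝ a x ⊆ Ω)
    (u : E3 → E3) (hu : ContDiffOn ℝ (⊤ : ℕ∞) u Ω)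
    (hdiv : ∀ x ∈ Ω, div3 u x = 0) :
    ∀ x ∈ Ω,
      curl3 (fun x => -cross3 (x - a) (∫ t in (0 : ℝ)..1, t • u (a + t • (x - a)))) x
        = u x := by
  intro x hx
  set y : E3 := x - a with hy
  -- basic differentiability facts about u
  have hud : ∀ z ∈ Ω, HasFDerivAt u (fderiv ℝ u z) z := fun z hz =>
    ((hu.differentiableOn (by simp)) z hz).differentiableAt
      (hΩ.mem_nhds hz) |>.hasFDerivAt
  have hDucont : ContinuousOn (fderiv ℝ u) Ω := by
    have h1 := (contDiffOn_infty_iff_fderiv_of_isOpen hΩ).1 (by exact_mod_cast hu)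
    exact h1.2.continuousOn
  have hφΩ : ∀ t ∈ Icc (0:ℝ) 1, a + t • y ∈ Ω := fun t ht =>
    hstar x hx (hsegmem a ht)
  -- the open set where the homotopy lives
  set U : Set (E3 × ℝ) := (fun p : E3 × ℝ => a + p.2 • (p.1 - a)) ⁻¹' Ω with hUdef
  have hφc : Continuous (fun p : E3 × ℝ => a + p.2 • (p.1 - a)) := by
    exact continuous_const.add (continuous_snd.smul (continuous_fst.sub continuous_const))
  have hUopen : IsOpen U := hΩ.preimage hφc
  have hxU : {x} ×ˢ Icc (0:ℝ) 1 ⊆ U := by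
    rintro ⟨z, t⟩ ⟨hz, ht⟩
    simp only [mem_singleton_iff] at hz
    subst hz
    exact hφΩ t ht
  obtain ⟨δ, hδpos, hδ⟩ := (isCompact_singleton.prod isCompact_Icc).exists_thickening_subset_open
    hUopen hxU
  have hcbU : Metric.closedBall x (δ/2) ×ˢ Icc (0:ℝ) 1 ⊆ U := by
    rintro ⟨z, t⟩ ⟨hz, ht⟩
    apply hδ
    rw [Metric.mem_thickening_iff]
    refine ⟨(x, t), ⟨rfl, ht⟩, ?_⟩
    rw [Prod.dist_eq]
    simp only [dist_self]
    calc max (dist z x) 0 ≤ δ/2 := by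
          simp [Metric.mem_closedBall.1 hz, le_of_lt (half_pos hδpos)]
      _ < δ := by linarith
  -- Step A : derivative of the parametric integral
  set W : E3 →L[ℝ] E3 := ∫ t in (0:ℝ)..1, (t^2) • fderiv ℝ u (a + t • y) with hWdef
  have hDucontt : ContinuousOn (fun t : ℝ => (t^2) • fderiv ℝ u (a + t • y)) (Icc (0:ℝ) 1) := by
    apply ContinuousOn.fun_smul (by fun_prop)
    exact hDucont.comp (by fun_prop) hφΩ
  have hWint : IntervalIntegrable (fun t : ℝ => (t^2) • fderiv ℝ u (a + t • y))
      volume (0:ℝ) 1 := by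
    apply ContinuousOn.intervalIntegrable
    rwa [uIcc_of_le (by norm_num : (0:ℝ) ≤ 1)]
  have hucontt : ContinuousOn (fun t : ℝ => u (a + t • y)) (Icc (0:ℝ) 1) :=
    hu.continuousOn.comp (by fun_prop) hφΩ
  have hmemcb : ∀ z ∈ Metric.closedBall x (δ/2), ∀ t ∈ Icc (0:ℝ) 1,
      a + t • (z - a) ∈ Ω := fun z hz t ht => hcbU (Set.mk_mem_prod hz ht)
  have hK : IsCompact (Metric.closedBall x (δ/2) ×ˢ Icc (0:ℝ) 1) :=
    (isCompact_closedBall _ _).prod isCompact_Icc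
  have hF'cont : ContinuousOn
      (fun p : E3 × ℝ => (p.2^2) • fderiv ℝ u (a + p.2 • (p.1 - a)))
      (Metric.closedBall x (δ/2) ×ˢ Icc (0:ℝ) 1) := by
    apply ContinuousOn.fun_smul (by fun_prop)
    exact hDucont.comp (hφc.continuousOn) (fun p hp => hcbU hp)
  obtain ⟨C, hC⟩ := hK.exists_bound_of_continuousOn hF'cont
  have hW : HasFDerivAt (fun z => ∫ t in (0:ℝ)..1, t • u (a + t • (z - a))) W x := by
    rw [hWdef]
    apply intervalIntegral.hasFDerivAt_integral_of_dominated_of_fderiv_le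
      (F := fun z t => t • u (a + t • (z - a)))
      (F' := fun z t => (t^2) • fderiv ℝ u (a + t • (z - a)))
      (s := Metric.ball x (δ/2)) (bound := fun _ => C) (Metric.ball_mem_nhds x (half_pos hδpos))
    · filter_upwards [Metric.closedBall_mem_nhds x (half_pos hδpos)] with z hz
      refine ContinuousOn.aestronglyMeasurable ?_ measurableSet_uIoc
      apply ContinuousOn.fun_smul continuousOn_id
      refine (hu.continuousOn.comp (by fun_prop) ?_)
      exact fun t ht => hmemcb z hz t (huIoc01 ht)
    · apply ContinuousOn.intervalIntegrable
      rw [uIcc_of_le (by norm_num : (0:ℝ) ≤ 1)]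
      apply ContinuousOn.fun_smul continuousOn_id
      exact hu.continuousOn.comp (by fun_prop) (fun t ht => by
        simpa [hy] using hφΩ t ht)
    · refine ContinuousOn.aestronglyMeasurable ?_ measurableSet_uIoc
      apply ContinuousOn.fun_smul (by fun_prop)
      refine hDucont.comp (by fun_prop) (fun t ht => ?_)
      simpa [hy] using hφΩ t (huIoc01 ht)
    · filter_upwards with t ht z hz
      exact hC (z, t) ⟨Metric.ball_subset_closedBall hz, huIoc01 ht⟩
    · exact intervalIntegrable_const
    · filter_upwards with t ht z hz
      have hzΩ : a + t • (z - a) ∈ Ω :=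
        hmemcb z (Metric.ball_subset_closedBall hz) t (huIoc01 ht)
      have hinner : HasFDerivAt (fun z : E3 => a + t • (z - a))
          (t • (ContinuousLinearMap.id ℝ E3)) z :=
        (((hasFDerivAt_id z).sub_const a).const_smul t).const_add a
      have hcomp := HasFDerivAt.comp (g := u) (x := z) (hud _ hzΩ) hinner
      have := hcomp.const_smul t
      convert this using 1 <;> ext v <;>
      simp [smul_smul, pow_two]
  -- avoid abbreviation: the function components
  set w : E3 → E3 := fun z => ∫ t in (0:ℝ)..1, t • u (a + t • (z - a)) with hwdef
  -- derivatives of the coordinates of w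
  have hwk : ∀ k : Fin 3, HasFDerivAt (fun z => w z k)
      ((EuclideanSpace.proj k : E3 →L[ℝ] ℝ).comp W) x := fun k =>
    (EuclideanSpace.proj k : E3 →L[ℝ] ℝ).hasFDerivAt.comp x hW
  have hyk : ∀ k : Fin 3, HasFDerivAt (fun z : E3 => (z - a) k)
      (EuclideanSpace.proj k : E3 →L[ℝ] ℝ) x := by
    intro k
    have := (EuclideanSpace.proj k : E3 →L[ℝ] ℝ).hasFDerivAt.comp x
      ((hasFDerivAt_id x).sub_const a)
    simpa [Function.comp_def] using this
  have hGpq : ∀ p q : Fin 3,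
      HasFDerivAt (fun z : E3 => (z - a) p * w z q - (z - a) q * w z p)
      ((((x - a) p) • ((EuclideanSpace.proj q : E3 →L[ℝ] ℝ).comp W)
          + (w x q) • (EuclideanSpace.proj p : E3 →L[ℝ] ℝ))
        - (((x - a) q) • ((EuclideanSpace.proj p : E3 →L[ℝ] ℝ).comp W)
          + (w x p) • (EuclideanSpace.proj q : E3 →L[ℝ] ℝ))) x := fun p q =>
    ((hyk p).mul (hwk q)).sub ((hyk q).mul (hwk p))
  -- the components of v as products
  have hv0 : (fun z : E3 =>
        (-cross3 (z - a) (∫ t in (0:ℝ)..1, t • u (a + t • (z - a))) : E3) (0 : Fin 3))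
      = fun z : E3 => (z - a) 2 * w z 1 - (z - a) 1 * w z 2 := by
    funext z
    simp [cross3, hwdef]
  have hv1 : (fun z : E3 =>
        (-cross3 (z - a) (∫ t in (0:ℝ)..1, t • u (a + t • (z - a))) : E3) (1 : Fin 3))
      = fun z : E3 => (z - a) 0 * w z 2 - (z - a) 2 * w z 0 := by
    funext z
    simp [cross3, hwdef]
  have hv2 : (fun z : E3 =>
        (-cross3 (z - a) (∫ t in (0:ℝ)..1, t • u (a + t • (z - a))) : E3) (2 : Fin 3))
      = fun z : E3 => (z - a) 1 * w z 0 - (z - a) 0 * w z 1 := by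
    funext z
    simp [cross3, hwdef]
  have hprojapp : ∀ (j : Fin 3) (v : E3), (EuclideanSpace.proj j : E3 →L[ℝ] ℝ) v = v j :=
    fun _ _ => rfl
  have huint : IntervalIntegrable (fun t : ℝ => t • u (a + t • y)) volume 0 1 := by
    apply ContinuousOn.intervalIntegrable
    rw [uIcc_of_le (by norm_num : (0:ℝ) ≤ 1)]
    exact continuousOn_id.smul hucontt
  have hWcomp : ∀ (ξ : E3) (j : Fin 3),
      W ξ j = ∫ t in (0:ℝ)..1, t^2 * ((fderiv ℝ u (a + t • y)) ξ j) := by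
    intro ξ j
    have hint2 : IntervalIntegrable (fun t : ℝ => ((t^2) • fderiv ℝ u (a + t • y)) ξ)
        volume 0 1 := by
      apply ContinuousOn.intervalIntegrable
      rw [uIcc_of_le (by norm_num : (0:ℝ) ≤ 1)]
      exact hDucontt.clm_apply continuousOn_const
    rw [← hprojapp j (W ξ), hWdef, ContinuousLinearMap.intervalIntegral_apply hWint ξ,
      ← (EuclideanSpace.proj j : E3 →L[ℝ] ℝ).intervalIntegral_comp_comm hint2]
    congr 1
  have hwxj : ∀ j : Fin 3, w x j = ∫ t in (0:ℝ)..1, t * (u (a + t • y) j) := by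
    intro j
    have : w x = ∫ t in (0:ℝ)..1, t • u (a + t • y) := by
      rw [hwdef]
    rw [← hprojapp j (w x), this,
      ← (EuclideanSpace.proj j : E3 →L[ℝ] ℝ).intervalIntegral_comp_comm huint]
    congr 1
  have hdival : ∀ z ∈ Ω,
      (∑ i : Fin 3, (fderiv ℝ u z) (EuclideanSpace.single i (1:ℝ)) i) = 0 := by
    intro z hz
    have hj : ∀ i : Fin 3, fderiv ℝ (fun z' => u z' i) z
        = (EuclideanSpace.proj i : E3 →L[ℝ] ℝ).comp (fderiv ℝ u z) := fun i =>
      ((EuclideanSpace.proj i : E3 →L[ℝ] ℝ).hasFDerivAt.comp z (hud z hz)).fderiv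
    have hd := hdiv z hz
    simp only [div3, pdComp, hj] at hd
    simpa [hprojapp] using hd
  have hqint : ∀ (ξ : E3) (i : Fin 3), IntervalIntegrable
      (fun t : ℝ => t^2 * ((fderiv ℝ u (a + t • y)) ξ i)) volume 0 1 := by
    intro ξ i
    apply ContinuousOn.intervalIntegrable
    rw [uIcc_of_le (by norm_num : (0:ℝ) ≤ 1)]
    apply ContinuousOn.mul (by fun_prop)
    exact (EuclideanSpace.proj i : E3 →L[ℝ] ℝ).continuous.comp_continuousOn
      ((hDucont.comp (by fun_prop) hφΩ).clm_apply continuousOn_const)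
  have htrace : (∑ i : Fin 3, W (EuclideanSpace.single i (1:ℝ)) i) = 0 := by
    have h1 : (∑ i : Fin 3, W (EuclideanSpace.single i (1:ℝ)) i)
        = ∫ t in (0:ℝ)..1, ∑ i : Fin 3,
            t^2 * ((fderiv ℝ u (a + t • y)) (EuclideanSpace.single i 1) i) := by
      simp_rw [hWcomp]
      exact (intervalIntegral.integral_finset_sum (fun i _ => hqint _ i)).symm
    rw [h1]
    have h2 : EqOn (fun t : ℝ => ∑ i : Fin 3,
        t^2 * ((fderiv ℝ u (a + t • y)) (EuclideanSpace.single i 1) i))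
        (fun _ => (0:ℝ)) (uIcc (0:ℝ) 1) := by
      intro t ht
      rw [uIcc_of_le (by norm_num : (0:ℝ) ≤ 1)] at ht
      simp only
      rw [← Finset.mul_sum, hdival _ (hφΩ t ht), mul_zero]
    rw [intervalIntegral.integral_congr h2]
    simp
  have hbasis : (∑ i : Fin 3, y i • EuclideanSpace.single i (1:ℝ)) = y := by
    ext k
    simp [Fin.sum_univ_three, EuclideanSpace.single_apply]
    fin_cases k <;> simp
  have hQsum : ∀ j : Fin 3,
      W y j = ∑ i : Fin 3, y i * W (EuclideanSpace.single i (1:ℝ)) j := by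
    intro j
    conv_lhs => rw [← hbasis]
    rw [map_sum]
    simp [Fin.sum_univ_three, _root_.map_smul]
  have hFTC : ∀ j : Fin 3, u x j = 2 * (w x j) + W y j := by
    intro j
    have hderiv : ∀ t ∈ uIcc (0:ℝ) 1, HasDerivAt (fun t : ℝ => t^2 * (u (a + t • y) j))
        (2*t * (u (a + t • y) j) + t^2 * ((fderiv ℝ u (a + t • y)) y j)) t := by
      intro t ht
      rw [uIcc_of_le (by norm_num : (0:ℝ) ≤ 1)] at ht
      have hzΩ := hφΩ t ht
      have hφ' : HasDerivAt (fun t : ℝ => a + t • y) y t := by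
        simpa using ((hasDerivAt_id t).smul_const y).const_add a
      have hu' : HasDerivAt (fun t : ℝ => u (a + t • y)) ((fderiv ℝ u (a + t • y)) y) t :=
        (hud _ hzΩ).comp_hasDerivAt t hφ'
      have huj : HasDerivAt (fun t : ℝ => u (a + t • y) j)
          ((fderiv ℝ u (a + t • y)) y j) t :=
        (EuclideanSpace.proj j : E3 →L[ℝ] ℝ).hasFDerivAt.comp_hasDerivAt t hu'
      have hpow : HasDerivAt (fun t : ℝ => t^2) (2*t) t := by
        simpa using hasDerivAt_pow 2 t
      exact hpow.mul huj
    have hint1 : IntervalIntegrable (fun t : ℝ => 2*t * (u (a + t • y) j)) volume 0 1 := by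
      apply ContinuousOn.intervalIntegrable
      rw [uIcc_of_le (by norm_num : (0:ℝ) ≤ 1)]
      apply ContinuousOn.mul (by fun_prop)
      exact (EuclideanSpace.proj j : E3 →L[ℝ] ℝ).continuous.comp_continuousOn hucontt
    have hint2 := hqint y j
    have hFTCv := intervalIntegral.integral_eq_sub_of_hasDerivAt hderiv (hint1.add hint2)
    rw [intervalIntegral.integral_add hint1 hint2] at hFTCv
    have hl : (∫ t in (0:ℝ)..1, 2*t * (u (a + t • y) j)) = 2 * (w x j) := by
      rw [hwxj j]
      rw [← intervalIntegral.integral_const_mul]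
      congr 1
      funext t
      ring
    rw [hl, ← hWcomp y j] at hFTCv
    rw [hFTCv]
    simp [hy]
  -- derivatives of the components of v
  have hd0 := hv0.symm ▸ hGpq 2 1
  have hd1 := hv1.symm ▸ hGpq 0 2
  have hd2 := hv2.symm ▸ hGpq 1 0
  have htrace' := htrace
  rw [Fin.sum_univ_three] at htrace'
  have hQ0 := hQsum 0
  have hQ1 := hQsum 1
  have hQ2 := hQsum 2
  rw [Fin.sum_univ_three] at hQ0 hQ1 hQ2
  have hF0 := hFTC 0
  have hF1 := hFTC 1
  have hF2 := hFTC 2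
  simp only [hy] at hQ0 hQ1 hQ2 hF0 hF1 hF2
  simp only [PiLp.sub_apply] at hQ0 hQ1 hQ2 hF0 hF1 hF2 htrace'
  ext j
  fin_cases j
  · show pdComp 1 2 _ x - pdComp 2 1 _ x = u x 0
    simp only [pdComp]
    rw [hd2.fderiv, hd1.fderiv]
    simp only [ContinuousLinearMap.sub_apply, ContinuousLinearMap.add_apply,
      ContinuousLinearMap.smul_apply, ContinuousLinearMap.coe_comp', Function.comp_apply,
      smul_eq_mul, hprojapp, EuclideanSpace.single_apply, PiLp.sub_apply]
    norm_num [Fin.ext_iff]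
    linear_combination -hF0 - hQ0 - (x 0 - a 0) * htrace'
  · show pdComp 2 0 _ x - pdComp 0 2 _ x = u x 1
    simp only [pdComp]
    rw [hd0.fderiv, hd2.fderiv]
    simp only [ContinuousLinearMap.sub_apply, ContinuousLinearMap.add_apply,
      ContinuousLinearMap.smul_apply, ContinuousLinearMap.coe_comp', Function.comp_apply,
      smul_eq_mul, hprojapp, EuclideanSpace.single_apply, PiLp.sub_apply]
    norm_num [Fin.ext_iff]
    linear_combination -hF1 - hQ1 - (x 1 - a 1) * htrace'
  · show pdComp 0 1 _ x - pdComp 1 0 _ x = u x 2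
    simp only [pdComp]
    rw [hd1.fderiv, hd0.fderiv]
    simp only [ContinuousLinearMap.sub_apply, ContinuousLinearMap.add_apply,
      ContinuousLinearMap.smul_apply, ContinuousLinearMap.coe_comp', Function.comp_apply,
      smul_eq_mul, hprojapp, EuclideanSpace.single_apply, PiLp.sub_apply]
    norm_num [Fin.ext_iff]
    linear_combination -hF2 - hQ2 - (x 2 - a 2) * htrace'



end Part2


theorem stmt14 (Ω : Set (EuclideanSpace ℝ (Fin 3))) (hΩ : IsOpen Ω)
    (a : EuclideanSpace ℝ (Fin 3)) (ha : a ∈ Ω)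
    (hstar : ∀ x ∈ Ω, segment ℝ a x ⊆ Ω)
    (u : EuclideanSpace ℝ (Fin 3) → EuclideanSpace ℝ (Fin 3))
    (hu : ContDiffOn ℝ (⊤ : ℕ∞) u Ω)
    (hdiv : ∀ x ∈ Ω, div3 u x = 0) :
    ContDiffOn ℝ (⊤ : ℕ∞)
      (fun x => -cross3 (x - a) (∫ t in (0 : ℝ)..1, t • u (a + t • (x - a)))) Ω ∧
    ∀ x ∈ Ω,
      curl3 (fun x => -cross3 (x - a) (∫ t in (0 : ℝ)..1, t • u (a + t • (x - a)))) x =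
        u x :=
  ⟨part1 Ω hΩ a hstar u hu, part2 Ω hΩ a hstar u hu hdiv⟩

end
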